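/- Let G be an abelian continuous semigroup on a metric space (X, d). Then the set CR(G) of chain recurrent points for G is an invariant subset of X. -/
import Mathlib


/-- An `(ε, g)`-chain from `a` to `b` for the semigroup `G` on a metric space `X`:
a finite sequence `a = x₀, …, xₙ = b` (with `n ≥ 1`) together with maps
`g₀, …, g_{n-1} ∈ Ĝ = G ∪ {identity}` such that `d(gᵢ(g(xᵢ)), x_{i+1}) < ε` for each `i`. -/
def EpsChain {X : Type*} [MetricSpace X] (G : Set (X → X)) (ε : ℝ) (g : X → X)
    (a b : X) : Prop :=
  ∃ n : ℕ, 0 < n ∧ ∃ x : Fin (n + 1) → X, ∃ gs : Fin n → X → X,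
    x 0 = a ∧ x (Fin.last n) = b ∧
    ∀ i : Fin n, gs i ∈ G ∪ {(id : X → X)} ∧ dist (gs i (g (x i.castSucc))) (x i.succ) < ε

/-- `x` is a chain recurrent point for `G`: for every `ε > 0` and every `g ∈ G` there is an
`(ε, g)`-chain from `x` to itself. -/
def ChainRecurrent {X : Type*} [MetricSpace X] (G : Set (X → X)) (x : X) : Prop :=
  ∀ ε > 0, ∀ g ∈ G, EpsChain G ε g x x

/-- If `G` is an abelian continuous semigroup on a metric space `(X, d)`, then the set `CR(G)`
of chain recurrent points for `G` is an invariant subset of `X`. -/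
theorem chainRecurrent_invariant {X : Type*} [MetricSpace X] (G : Set (X → X))
    (hcont : ∀ g ∈ G, Continuous g)
    (hcomp : ∀ g ∈ G, ∀ h ∈ G, g ∘ h ∈ G)
    (habel : ∀ g ∈ G, ∀ h ∈ G, g ∘ h = h ∘ g) :
    ∀ g ∈ G, ∀ x ∈ {x | ChainRecurrent G x}, g x ∈ {x | ChainRecurrent G x} := by
  intro g hg x hx ε hε h hh
  -- continuity modulus of g at x
  obtain ⟨δ, hδpos, hδ⟩ := Metric.continuous_iff.mp (hcont g hg) x ε hε
  have hminpos : 0 < min δ ε := lt_min hδpos hε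
  obtain ⟨n, hn, xs, gs, hx0, hxl, hstep⟩ := hx (min δ ε) hminpos (h ∘ g) (hcomp h hh g hg)
  have hcomm : ∀ z : X, g (h z) = h (g z) := fun z => congrFun (habel g hg h hh) z
  refine ⟨n, hn, fun j => if j.val = 0 ∨ j.val = n then g x else xs j,
    fun i => (if i.val = n - 1 then g else id) ∘ gs i ∘ (if i.val = 0 then id else g),
    by simp, by simp, ?_⟩
  intro i
  obtain ⟨hgsi, hdi⟩ := hstep i
  have hilt : i.val < n := i.isLt
  have hcs : i.castSucc.val = i.val := rfl
  have hsc : i.succ.val = i.val + 1 := rfl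
  constructor
  · beta_reduce
    rcases hgsi with hG | hid
    · split_ifs with h1 h2 h3 <;>
        try simp only [Function.comp_id, Function.id_comp]
      · exact Or.inl (hcomp g hg _ hG)
      · exact Or.inl (hcomp g hg _ (hcomp _ hG g hg))
      · exact Or.inl hG
      · exact Or.inl (hcomp _ hG g hg)
    · simp only [Set.mem_singleton_iff] at hid
      rw [hid]
      split_ifs with h1 h2 h3 <;>
        simp only [Function.comp_id, Function.id_comp, Function.comp_def, id_eq]
      · exact Or.inl hg
      · exact Or.inl (hcomp g hg g hg)
      · exact Or.inr rfl
      · exact Or.inl hg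
  · -- distance estimate
    have hcsval : ¬ (i.val = n) := Nat.ne_of_lt hilt
    have hsucc0 : ¬ (i.succ.val = 0) := by simp [hsc]
    have hsuccn : (i.succ.val = n) ↔ (i.val = n - 1) := by omega
    simp only [Function.comp_apply]
    by_cases h0 : i.val = 0 <;> by_cases hl : i.val = n - 1
    · -- first and last step (n = 1)
      have hxsc : xs i.castSucc = x := by
        have : i.castSucc = 0 := Fin.ext h0
        rw [this, hx0]
      have hxsu : xs i.succ = x := by
        have : i.succ = Fin.last n := Fin.ext (by simp [hsc]; omega)
        rw [this, hxl]
      have hd : dist (gs i (h (g x))) x < δ := by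
        have := hdi
        rw [hxsc, hxsu] at this
        simpa using lt_of_lt_of_le this (min_le_left _ _)
      simp only [if_pos hl, if_pos h0, if_pos (Or.inl (show i.castSucc.val = 0 from h0)),
        if_pos (Or.inr (hsuccn.mpr hl)), id_eq]
      exact hδ _ hd
    · -- first step, not last
      have hxsc : xs i.castSucc = x := by
        have : i.castSucc = 0 := Fin.ext h0
        rw [this, hx0]
      have hd : dist (gs i (h (g x))) (xs i.succ) < ε := by
        have := hdi
        rw [hxsc] at this
        simpa using lt_of_lt_of_le this (min_le_right _ _)
      simp only [if_neg hl, if_pos h0, if_pos (Or.inl (show i.castSucc.val = 0 from h0)),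
        if_neg (show ¬ (i.succ.val = 0 ∨ i.succ.val = n) by
          rw [hsuccn]; push_neg; exact ⟨hsucc0, hl⟩), id_eq]
      exact hd
    · -- last step, not first
      have hxsu : xs i.succ = x := by
        have : i.succ = Fin.last n := Fin.ext (by simp [hsc]; omega)
        rw [this, hxl]
      have hd : dist (gs i (h (g (xs i.castSucc)))) x < δ := by
        have := hdi
        rw [hxsu] at this
        simpa using lt_of_lt_of_le this (min_le_left _ _)
      simp only [if_pos hl, if_neg h0,
        if_neg (show ¬ (i.castSucc.val = 0 ∨ i.castSucc.val = n) by push_neg; exact ⟨h0, hcsval⟩),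
        if_pos (Or.inr (hsuccn.mpr hl))]
      rw [hcomm]
      exact hδ _ hd
    · -- middle step
      have hd : dist (gs i (h (g (xs i.castSucc)))) (xs i.succ) < ε := by
        simpa using lt_of_lt_of_le hdi (min_le_right _ _)
      simp only [if_neg hl, if_neg h0,
        if_neg (show ¬ (i.castSucc.val = 0 ∨ i.castSucc.val = n) by push_neg; exact ⟨h0, hcsval⟩),
        if_neg (show ¬ (i.succ.val = 0 ∨ i.succ.val = n) by
          rw [hsuccn]; push_neg; exact ⟨hsucc0, hl⟩), id_eq]
      rw [hcomm]
      exact hd
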